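/- Conservation law under gradient flow: let L : ℝ^{l×d} × ℝ^{e×l} → ℝ be differentiable and invariant under all neuron rescalings, i.e. L(diag(α)·W¹, W²·diag(α)⁻¹) = L(W¹, W²) for every α ∈ ℝ^l with strictly positive entries. Let θ : ℝ → ℝ^{l×d} × ℝ^{e×l}, θ(t) = (W¹(t), W²(t)), be a differentiable curve satisfying the gradient flow equation θ'(t) = −∇L(θ(t)) for all t. Then for every hidden-neuron index k ∈ {1,…,l}, the function t ↦ ∑_{i=1}^{d} (W¹_{ki}(t))² − ∑_{j=1}^{e} (W²_{jk}(t))² is constant in t. -/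

import Mathlib

/-- Conservation law under gradient flow. If `L` is differentiable
and invariant under all neuron rescalings, and `t ↦ (W¹(t), W²(t))` solves the
gradient flow equation `θ' = −∇L(θ)` (stated coordinate-wise: the derivative of
each weight is minus the corresponding partial derivative of `L`), then for each
hidden neuron `k` the quantity `∑ᵢ (W¹_{ki})² − ∑ⱼ (W²_{jk})²` is constant in `t`. -/
theorem gradient_flow_conserves_neuron_balance (l d e : ℕ)
    (L : ((Fin l → Fin d → ℝ) × (Fin e → Fin l → ℝ)) → ℝ)
    (hdiff : Differentiable ℝ L)
    (hinv : ∀ (V1 : Fin l → Fin d → ℝ) (V2 : Fin e → Fin l → ℝ) (α : Fin l → ℝ),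
      (∀ k, 0 < α k) →
      L (fun k i => α k * V1 k i, fun j k => V2 j k * (α k)⁻¹) = L (V1, V2))
    (W1 : ℝ → Fin l → Fin d → ℝ) (W2 : ℝ → Fin e → Fin l → ℝ)
    (hflow1 : ∀ (t : ℝ) (k : Fin l) (i : Fin d),
      HasDerivAt (fun t => W1 t k i)
        (-(fderiv ℝ L (W1 t, W2 t) (Pi.single k (Pi.single i (1 : ℝ)), 0))) t)
    (hflow2 : ∀ (t : ℝ) (j : Fin e) (k : Fin l),
      HasDerivAt (fun t => W2 t j k)
        (-(fderiv ℝ L (W1 t, W2 t) (0, Pi.single j (Pi.single k (1 : ℝ))))) t)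
    (k : Fin l) (t t' : ℝ) :
    ∑ i, (W1 t k i) ^ 2 - ∑ j, (W2 t j k) ^ 2
      = ∑ i, (W1 t' k i) ^ 2 - ∑ j, (W2 t' j k) ^ 2 := by
  -- Key balance identity from invariance
  have key : ∀ (V1 : Fin l → Fin d → ℝ) (V2 : Fin e → Fin l → ℝ),
      ∑ i, V1 k i * fderiv ℝ L (V1, V2) (Pi.single k (Pi.single i (1:ℝ)), 0)
        - ∑ j, V2 j k * fderiv ℝ L (V1, V2) (0, Pi.single j (Pi.single k (1:ℝ))) = 0 := by
    intro V1 V2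
    set E : Fin l → Fin d → ℝ := fun k' i => if k' = k then V1 k' i else 0 with hE
    set F : Fin e → Fin l → ℝ := fun j k' => if k' = k then -V2 j k' else 0 with hF
    have hc1 : HasDerivAt (fun s : ℝ =>
        ((fun k' i => (if k' = k then s else 1) * V1 k' i,
          fun j k' => V2 j k' * (if k' = k then s else 1)⁻¹) :
          (Fin l → Fin d → ℝ) × (Fin e → Fin l → ℝ))) (E, F) 1 := by
      apply HasDerivAt.prodMk
      · rw [hasDerivAt_pi]
        intro k'
        rw [hasDerivAt_pi]
        intro i
        by_cases h : k' = k
        · simp only [hE, if_pos h]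
          simpa using (hasDerivAt_id (1:ℝ)).mul_const (V1 k' i)
        · simp only [hE, if_neg h]
          simpa using hasDerivAt_const (1:ℝ) (1 * V1 k' i)
      · rw [hasDerivAt_pi]
        intro j
        rw [hasDerivAt_pi]
        intro k'
        by_cases h : k' = k
        · simp only [hF, if_pos h]
          have := (hasDerivAt_inv (by norm_num : (1:ℝ) ≠ 0)).const_mul (V2 j k')
          simpa using this
        · simp only [hF, if_neg h]
          simpa using hasDerivAt_const (1:ℝ) (V2 j k' * 1⁻¹)
    have hg : HasDerivAt (fun s : ℝ => L
        (fun k' i => (if k' = k then s else 1) * V1 k' i,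
         fun j k' => V2 j k' * (if k' = k then s else 1)⁻¹))
        (fderiv ℝ L ((fun k' i => (if k' = k then (1:ℝ) else 1) * V1 k' i,
          fun j k' => V2 j k' * (if k' = k then (1:ℝ) else 1)⁻¹)) (E, F)) 1 :=
      (hdiff _).hasFDerivAt.comp_hasDerivAt 1 hc1
    have hc10 : ((fun k' i => (if k' = k then (1:ℝ) else 1) * V1 k' i,
          fun j k' => V2 j k' * (if k' = k then (1:ℝ) else 1)⁻¹) :
          (Fin l → Fin d → ℝ) × (Fin e → Fin l → ℝ)) = (V1, V2) := by
      simp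
    rw [hc10] at hg
    -- the function is locally constant
    have hconst : HasDerivAt (fun s : ℝ => L
        (fun k' i => (if k' = k then s else 1) * V1 k' i,
         fun j k' => V2 j k' * (if k' = k then s else 1)⁻¹)) 0 1 := by
      have heq : (fun s : ℝ => L
          (fun k' i => (if k' = k then s else 1) * V1 k' i,
           fun j k' => V2 j k' * (if k' = k then s else 1)⁻¹))
          =ᶠ[nhds 1] (fun _ => L (V1, V2)) := by
        filter_upwards [Ioi_mem_nhds (zero_lt_one : (0:ℝ) < 1)] with s hs
        exact hinv V1 V2 (fun k' => if k' = k then s else 1)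
          (fun k' => by by_cases h : k' = k <;> simp [h, hs, Set.mem_Ioi.mp hs])
      exact (hasDerivAt_const (1:ℝ) (L (V1, V2))).congr_of_eventuallyEq heq
    have h0 : fderiv ℝ L (V1, V2) (E, F) = 0 := hg.unique hconst
    -- decompose (E, F) as a sum of basis directions
    have hEF : ((E, F) : (Fin l → Fin d → ℝ) × (Fin e → Fin l → ℝ))
        = (∑ i, V1 k i • ((Pi.single k (Pi.single i (1:ℝ)) : Fin l → Fin d → ℝ),
            (0 : Fin e → Fin l → ℝ)))
          + ∑ j, (-V2 j k) • ((0 : Fin l → Fin d → ℝ),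
            (Pi.single j (Pi.single k (1:ℝ)) : Fin e → Fin l → ℝ)) := by
      apply Prod.ext
      · funext k' i
        simp only [Prod.fst_add, Prod.fst_sum, Prod.smul_fst, Finset.sum_apply,
          Pi.add_apply, Pi.smul_apply, smul_eq_mul, hE, Prod.snd_add]
        by_cases h : k' = k
        · subst h
          simp [Pi.single_apply, Finset.sum_ite_eq']
        · simp [Pi.single_apply, Ne.symm h, h]
      · funext j k'
        simp only [Prod.snd_add, Prod.snd_sum, Prod.smul_snd, Finset.sum_apply,
          Pi.add_apply, Pi.smul_apply, smul_eq_mul, hF]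
        by_cases h : k' = k
        · subst h
          simp [Pi.single_apply, apply_ite (fun f : Fin l → ℝ => f k'),
            mul_ite, Finset.sum_ite_eq]
        · simp [Pi.single_apply, apply_ite (fun f : Fin l → ℝ => f k'),
            Ne.symm h, h]
    rw [hEF] at h0
    simp only [map_add, map_sum, map_smul, smul_eq_mul, neg_mul,
      Finset.sum_neg_distrib] at h0
    linarith
  -- Derivative of the balance quantity is zero
  have hF : ∀ s : ℝ, HasDerivAt
      (fun t => ∑ i, (W1 t k i) ^ 2 - ∑ j, (W2 t j k) ^ 2) 0 s := by
    intro s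
    have h1 : HasDerivAt (fun t => ∑ i, (W1 t k i) ^ 2)
        (∑ i, 2 * W1 s k i * (-(fderiv ℝ L (W1 s, W2 s) (Pi.single k (Pi.single i (1:ℝ)), 0)))) s := by
      apply HasDerivAt.fun_sum
      intro i _
      have := (hflow1 s k i).fun_pow 2
      simpa [mul_comm, mul_assoc, mul_left_comm] using this
    have h2 : HasDerivAt (fun t => ∑ j, (W2 t j k) ^ 2)
        (∑ j, 2 * W2 s j k * (-(fderiv ℝ L (W1 s, W2 s) (0, Pi.single j (Pi.single k (1:ℝ)))))) s := by
      apply HasDerivAt.fun_sum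
      intro j _
      have := (hflow2 s j k).fun_pow 2
      simpa [mul_comm, mul_assoc, mul_left_comm] using this
    have := h1.sub h2
    have hz : (∑ i, 2 * W1 s k i * (-(fderiv ℝ L (W1 s, W2 s) (Pi.single k (Pi.single i (1:ℝ)), 0))))
        - (∑ j, 2 * W2 s j k * (-(fderiv ℝ L (W1 s, W2 s) (0, Pi.single j (Pi.single k (1:ℝ)))))) = 0 := by
      have hk := key (W1 s) (W2 s)
      have e1 : ∀ i : Fin d, 2 * W1 s k i * (-(fderiv ℝ L (W1 s, W2 s) (Pi.single k (Pi.single i (1:ℝ)), 0)))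
          = -2 * (W1 s k i * fderiv ℝ L (W1 s, W2 s) (Pi.single k (Pi.single i (1:ℝ)), 0)) := by
        intro i; ring
      have e2 : ∀ j : Fin e, 2 * W2 s j k * (-(fderiv ℝ L (W1 s, W2 s) (0, Pi.single j (Pi.single k (1:ℝ)))))
          = -2 * (W2 s j k * fderiv ℝ L (W1 s, W2 s) (0, Pi.single j (Pi.single k (1:ℝ)))) := by
        intro j; ring
      rw [Finset.sum_congr rfl (fun i _ => e1 i), Finset.sum_congr rfl (fun j _ => e2 j),
        ← Finset.mul_sum, ← Finset.mul_sum, ← mul_sub, hk, mul_zero]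
    rw [hz] at this
    exact this
  exact is_const_of_deriv_eq_zero (fun x => (hF x).differentiableAt)
    (fun x => (hF x).deriv) t t'
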